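/- Let u ∈ ℝ^N and 1 ≤ k ≤ N-1. Suppose for each i ∈ {1,...,k} we have -(N-1)δ ≤ N·u_i - ∑_{j=1}^N u_j ≤ 0. Then for each i ∈ {1,...,k}: 0 ≤ (1/(N-k))·∑_{j=k+1}^N u_j - u_i ≤ δ·(N-1)/(N-k). -/

import Mathlib

open Finset

/-- If `-(N-1)δ ≤ N u_i - ∑_j u_j ≤ 0` for all `i ∈ {1,…,k}`, then for each such `i`,
`0 ≤ (1/(N-k)) ∑_{j=k+1}^N u_j - u_i ≤ δ(N-1)/(N-k)`. -/
theorem group_average_bounds (N k : ℕ) (hN : 2 ≤ N) (hk1 : 1 ≤ k) (hk2 : k ≤ N - 1)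
    (δ : ℝ) (hδ : 0 ≤ δ) (u : Fin N → ℝ)
    (h : ∀ i : Fin N, (i : ℕ) < k →
      -(((N : ℝ) - 1) * δ) ≤ (N : ℝ) * u i - ∑ j, u j ∧ (N : ℝ) * u i - ∑ j, u j ≤ 0) :
    ∀ i : Fin N, (i : ℕ) < k →
      0 ≤ (1 / ((N : ℝ) - k)) * (∑ j ∈ univ.filter (fun j : Fin N => k ≤ (j : ℕ)), u j) - u i ∧
      (1 / ((N : ℝ) - k)) * (∑ j ∈ univ.filter (fun j : Fin N => k ≤ (j : ℕ)), u j) - u i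
        ≤ δ * ((N : ℝ) - 1) / ((N : ℝ) - k) := by
  intro i hi
  have hkN : k < N := lt_of_le_of_lt hk2 (Nat.sub_lt (by omega) one_pos)
  have hNk : (0:ℝ) < (N:ℝ) - k := by
    have : (k:ℝ) < N := by exact_mod_cast hkN
    linarith
  have hNpos : (0:ℝ) < N := by positivity
  set S := ∑ j, u j with hS
  set T := ∑ j ∈ univ.filter (fun j : Fin N => k ≤ (j : ℕ)), u j with hT
  set A := ∑ j ∈ univ.filter (fun j : Fin N => (j : ℕ) < k), u j with hA
  have hsplit : T + A = S := by
    rw [hT, hA, hS]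
    rw [← Finset.sum_filter_add_sum_filter_not univ (fun j : Fin N => k ≤ (j : ℕ)) u]
    congr 1
    apply Finset.sum_congr _ (fun _ _ => rfl)
    refine Finset.ext fun j => ?_; simp
  have hcard : (univ.filter fun j : Fin N => (j:ℕ) < k).card = k := by
    have : (univ.filter fun j : Fin N => (j:ℕ) < k) = Finset.Iio (⟨k, hkN⟩ : Fin N) := by
      ext j; simp [Fin.lt_def]
    rw [this]; simp
  -- bounds on each u_j for j < k
  have hub : ∀ j ∈ univ.filter (fun j : Fin N => (j:ℕ) < k), u j ≤ S / N := by
    intro j hj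
    simp only [mem_filter] at hj
    have := (h j hj.2).2
    rw [le_div_iff₀ hNpos]
    nlinarith
  have hlb : ∀ j ∈ univ.filter (fun j : Fin N => (j:ℕ) < k), (S - ((N:ℝ)-1)*δ) / N ≤ u j := by
    intro j hj
    simp only [mem_filter] at hj
    have := (h j hj.2).1
    rw [div_le_iff₀ hNpos]
    nlinarith
  have hAub : A ≤ k * (S / N) := by
    calc A ≤ (univ.filter fun j : Fin N => (j:ℕ) < k).card • (S / N) :=
      Finset.sum_le_card_nsmul _ _ _ hub
    _ = k * (S / N) := by rw [hcard, nsmul_eq_mul]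
  have hAlb : (k:ℝ) * ((S - ((N:ℝ)-1)*δ) / N) ≤ A := by
    calc (k:ℝ) * ((S - ((N:ℝ)-1)*δ) / N)
        = (univ.filter fun j : Fin N => (j:ℕ) < k).card • ((S - ((N:ℝ)-1)*δ) / N) := by
          rw [hcard, nsmul_eq_mul]
    _ ≤ A := Finset.card_nsmul_le_sum _ _ _ hlb
  have hui_ub : u i ≤ S / N := hub i (by simp [hi])
  have hui_lb : (S - ((N:ℝ)-1)*δ) / N ≤ u i := hlb i (by simp [hi])
  have hmul_ub : ((N:ℝ) - k) * u i ≤ ((N:ℝ) - k) * (S / N) :=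
    mul_le_mul_of_nonneg_left hui_ub (le_of_lt hNk)
  have hmul_lb : ((N:ℝ) - k) * ((S - ((N:ℝ)-1)*δ) / N) ≤ ((N:ℝ) - k) * u i :=
    mul_le_mul_of_nonneg_left hui_lb (le_of_lt hNk)
  have hT_lb : ((N:ℝ) - k) * (S / N) ≤ T := by
    have h1 : ((N:ℝ) - k) * (S / N) = S - k * (S/N) := by field_simp
    linarith
  have hT_ub : T ≤ ((N:ℝ) - k) * (S / N) + k * (((N:ℝ)-1)*δ) / N := by
    have h1 : ((N:ℝ) - k) * (S / N) + k * (((N:ℝ)-1)*δ) / N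
        = S - (k:ℝ) * ((S - ((N:ℝ)-1)*δ) / N) := by field_simp; ring
    linarith
  constructor
  · rw [sub_nonneg, one_div, ← div_eq_inv_mul, le_div_iff₀ hNk]
    nlinarith
  · rw [sub_le_iff_le_add, one_div, ← div_eq_inv_mul, div_le_iff₀ hNk]
    have heq : δ*((N:ℝ)-1) + ((N:ℝ)-k)*((S-((N:ℝ)-1)*δ)/N)
        - (((N:ℝ)-k)*(S/N) + (k:ℝ)*(((N:ℝ)-1)*δ)/N) = 0 := by field_simp; ring
    have hkey : T ≤ δ*((N:ℝ)-1) + ((N:ℝ)-k) * u i := by linarith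
    have h2 : (δ * ((N:ℝ)-1) / ((N:ℝ)-k)) * ((N:ℝ)-k) = δ * ((N:ℝ)-1) := by
      field_simp
    nlinarith
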